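/- Let G be a finite group, H ⊴ G with K = G/H abelian, and λ the class function on G defined by integrating a word against an irreducible character: for an irreducible character χ of G, any word ω in m variables, any tuple a ∈ K^m and any z ∈ G, one has (1/|G|^m)·Σ_{x ∈ G_a} χ(ω(x)·z) = (1/χ(1)) · [(1/|G|^m)·Σ_{x∈G_a} χ(ω(x))] · χ(z), where G_a = π⁻¹(a₁) × ⋯ × π⁻¹(a_m). -/

import Mathlib

open scoped Classical

noncomputable section

def IsIrredChar (G : Type) [Group G] (χ : G → ℂ) : Prop :=
  ∃ V : FDRep ℂ G, CategoryTheory.Simple V ∧ ∀ g : G, χ g = V.character g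

section Aux

open CategoryTheory Module

lemma char_one_ne {G : Type} [Group G] (V : FDRep ℂ G) [Simple V] :
    V.character 1 ≠ 0 := by
  rw [FDRep.char_one]
  have h : finrank ℂ V ≠ 0 := by
    intro h
    have hs : Subsingleton V := (Module.finrank_zero_iff (R := ℂ)).mp h
    apply CategoryTheory.id_nonzero V
    ext v
    exact @Subsingleton.elim _ hs _ _
  exact_mod_cast h

/-- Schur-averaging: for a simple `V`, `(1/|G|) Σ_w χ(w s w⁻¹ z) = χ(s)χ(z)/χ(1)`. -/
lemma conj_average {G : Type} [Group G] [Fintype G] (V : FDRep ℂ G) [Simple V] (s z : G) :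
    (1 / (Fintype.card G : ℂ)) * ∑ w : G, V.character (w * s * w⁻¹ * z)
      = V.character s * V.character z / V.character 1 := by
  have hn : (Fintype.card G : ℂ) ≠ 0 := by
    exact_mod_cast Fintype.card_ne_zero
  have h1 := char_one_ne V
  set S : V →ₗ[ℂ] V := ∑ w : G, V.ρ (w * s * w⁻¹) with hS
  set T : V →ₗ[ℂ] V := (Fintype.card G : ℂ)⁻¹ • S with hT
  have hcomm : ∀ g : G, (V.ρ g) * T = T * (V.ρ g) := by
    intro g
    simp only [hT, hS, mul_smul_comm, smul_mul_assoc]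
    congr 1
    rw [Finset.mul_sum, Finset.sum_mul]
    rw [← Fintype.sum_bijective (g * ·) (Group.mulLeft_bijective g)
      (fun w => V.ρ g * V.ρ (w * s * w⁻¹)) (fun w => V.ρ (w * s * w⁻¹) * V.ρ g) ?_]
    intro w
    simp only [← map_mul]
    congr 1
    group
  set f : V ⟶ V := Action.Hom.mk (FGModuleCat.ofHom T) (fun g => FGModuleCat.hom_ext (hcomm g).symm) with hfdef
  obtain ⟨c, hc⟩ := CategoryTheory.endomorphism_simple_eq_smul_id ℂ f
  have hf : f.hom = FGModuleCat.ofHom T := rfl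
  have h2 : f.hom = c • 𝟙 V.V := by
    have := congrArg Action.Hom.hom hc.symm
    rwa [Action.smul_hom, Action.id_hom] at this
  rw [hf] at h2
  have hTc : T = c • LinearMap.id := by
    have := congrArg (fun k => k.hom.hom) h2
    exact this
  have htrT : LinearMap.trace ℂ V T = V.character s := by
    rw [hT, hS, map_smul, map_sum]
    have : ∀ w : G, LinearMap.trace ℂ V (V.ρ (w * s * w⁻¹)) = V.character s := by
      intro w
      exact congrArg V.character (rfl) ▸ (FDRep.char_conj V s w)
    simp only [this, Finset.sum_const, Finset.card_univ, nsmul_eq_mul, smul_eq_mul]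
    field_simp
  have htrc : LinearMap.trace ℂ V T = c * V.character 1 := by
    rw [hTc, map_smul, smul_eq_mul, FDRep.char_one]
    congr 1
    simp [LinearMap.trace_id]
  have hc_eq : c = V.character s / V.character 1 := by
    rw [eq_div_iff h1, ← htrT, htrc]
  have hterm : ∀ w : G, V.character (w * s * w⁻¹ * z)
      = LinearMap.trace ℂ V (V.ρ (w * s * w⁻¹) * V.ρ z) := by
    intro w
    rw [← map_mul]
    rfl
  calc (1 / (Fintype.card G : ℂ)) * ∑ w : G, V.character (w * s * w⁻¹ * z)
      = LinearMap.trace ℂ V (T * V.ρ z) := by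
        simp only [hterm, hT, hS, Finset.sum_mul, smul_mul_assoc, map_smul, map_sum,
          smul_eq_mul, one_div]
    _ = c * V.character z := by
        rw [hTc, smul_mul_assoc, map_smul, smul_eq_mul]
        congr 1
    _ = V.character s * V.character z / V.character 1 := by rw [hc_eq]; ring

lemma lift_conj {G : Type} [Group G] {m : ℕ} (w : G) (x : Fin m → G) (ω : FreeGroup (Fin m)) :
    (FreeGroup.lift fun i => w * x i * w⁻¹) ω = w * (FreeGroup.lift x) ω * w⁻¹ := by
  have h : (FreeGroup.lift fun i => w * x i * w⁻¹)
      = (MulAut.conj w).toMonoidHom.comp (FreeGroup.lift x) := by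
    apply FreeGroup.ext_hom
    intro i
    simp [MulAut.conj]
  rw [h]
  simp [MulAut.conj]

end Aux

/-- For `H ⊴ G` with abelian quotient `K`, an irreducible character `χ` of `G`, a word `ω`
in `m` variables, a tuple `a ∈ K^m` and `z ∈ G`:
`(1/|G|^m) Σ_{x ∈ G_a} χ(ω(x)z) = (1/χ(1)) [(1/|G|^m) Σ_{x ∈ G_a} χ(ω(x))] χ(z)`,
where `G_a = π⁻¹(a₁) × ⋯ × π⁻¹(a_m)`. -/
theorem word_integral_splits {G : Type} [Group G] [Fintype G]
    (H : Subgroup G) [H.Normal]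
    (hab : ∀ a b : G, a * b * a⁻¹ * b⁻¹ ∈ H)
    (χ : G → ℂ) (hχ : IsIrredChar G χ)
    (m : ℕ) (ω : FreeGroup (Fin m)) (a : Fin m → G ⧸ H) (z : G) :
    (1 / (Fintype.card G : ℂ) ^ m) *
        ∑ x ∈ Finset.univ.filter (fun x : Fin m → G => ∀ i, ((x i : G ⧸ H) = a i)),
          χ ((FreeGroup.lift x) ω * z) =
      (1 / χ 1) *
        ((1 / (Fintype.card G : ℂ) ^ m) *
          ∑ x ∈ Finset.univ.filter (fun x : Fin m → G => ∀ i, ((x i : G ⧸ H) = a i)),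
            χ ((FreeGroup.lift x) ω)) * χ z := by
  obtain ⟨V, hV, hχV⟩ := hχ
  haveI := hV
  set F := Finset.univ.filter (fun x : Fin m → G => ∀ i, ((x i : G ⧸ H) = a i)) with hF
  have hn : (Fintype.card G : ℂ) ≠ 0 := by exact_mod_cast Fintype.card_ne_zero
  have key : ∀ s : G, (1 / (Fintype.card G : ℂ)) * ∑ w : G, χ (w * s * w⁻¹ * z)
      = χ s * χ z / χ 1 := by
    intro s
    simp only [hχV]
    exact conj_average V s z
  have hconj : ∀ u v : G, ((u * v * u⁻¹ : G) : G ⧸ H) = (v : G ⧸ H) := by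
    intro u v
    rw [QuotientGroup.eq]
    have h := hab u v⁻¹
    convert h using 1
    group
  have hmem : ∀ u : G, ∀ x : Fin m → G, (∀ i, ((x i : G ⧸ H) = a i)) →
      ∀ i, (((u * x i * u⁻¹ : G) : G ⧸ H) = a i) := by
    intro u x hx i
    rw [hconj u (x i)]
    exact hx i
  have reindex : ∀ w : G, ∑ x ∈ F, χ ((FreeGroup.lift x) ω * z)
      = ∑ x ∈ F, χ (w * (FreeGroup.lift x) ω * w⁻¹ * z) := by
    intro w
    refine (Finset.sum_nbij' (fun x => fun i => w * x i * w⁻¹)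
      (fun x => fun i => w⁻¹ * x i * w) ?_ ?_ ?_ ?_ ?_).symm
    · intro x hx
      simp only [hF, Finset.mem_filter, Finset.mem_univ, true_and] at hx ⊢
      exact hmem w x hx
    · intro x hx
      simp only [hF, Finset.mem_filter, Finset.mem_univ, true_and] at hx ⊢
      intro i
      have := hmem w⁻¹ x hx i
      simpa using this
    · intro x _; funext i; group
    · intro x _; funext i; group
    · intro x _
      rw [lift_conj]
  have hS : ∑ x ∈ F, χ ((FreeGroup.lift x) ω * z)
      = ∑ x ∈ F, χ ((FreeGroup.lift x) ω) * χ z / χ 1 := by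
    have h1 : ∑ w : G, ∑ x ∈ F, χ (w * (FreeGroup.lift x) ω * w⁻¹ * z)
        = (Fintype.card G : ℂ) * ∑ x ∈ F, χ ((FreeGroup.lift x) ω * z) := by
      calc ∑ w : G, ∑ x ∈ F, χ (w * (FreeGroup.lift x) ω * w⁻¹ * z)
          = ∑ _w : G, ∑ x ∈ F, χ ((FreeGroup.lift x) ω * z) :=
            Finset.sum_congr rfl (fun w _ => (reindex w).symm)
        _ = (Fintype.card G : ℂ) * ∑ x ∈ F, χ ((FreeGroup.lift x) ω * z) := by
            rw [Finset.sum_const, Finset.card_univ, nsmul_eq_mul]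
    have h2 : ∑ x ∈ F, χ ((FreeGroup.lift x) ω * z)
        = (1 / (Fintype.card G : ℂ)) * ∑ w : G, ∑ x ∈ F, χ (w * (FreeGroup.lift x) ω * w⁻¹ * z) := by
      rw [h1]
      field_simp
    rw [h2, Finset.sum_comm, Finset.mul_sum]
    refine Finset.sum_congr rfl fun x _ => ?_
    exact key ((FreeGroup.lift x) ω)
  rw [hS]
  rw [show ∑ x ∈ F, χ ((FreeGroup.lift x) ω) * χ z / χ 1
      = (∑ x ∈ F, χ ((FreeGroup.lift x) ω)) * χ z / χ 1 by
    rw [← Finset.sum_div, ← Finset.sum_mul]]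
  ring
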